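/- Let 0 < u ≤ v < 1. Then ∫_u^v e^{-1/(2z)}·√(z/(1−z)) dz = √(π/(2e))·( erf(√((1−u)/(2u))) − erf(√((1−v)/(2v))) ) + e^{-1/(2u)}·√(u(1−u)) − e^{-1/(2v)}·√(v(1−v)), where erf(x) = (2/√π)∫_0^x e^{-t²} dt. -/

import Mathlib

/-- The error function erf(x) = (2/√π)∫_0^x e^{-t²} dt. -/
noncomputable def errf (x : ℝ) : ℝ :=
  (2 / Real.sqrt Real.pi) * ∫ t in (0 : ℝ)..x, Real.exp (-t ^ 2)

/-- Optimal homodyne scale density Q(z) = e^{-1/(2z)}·√(z/(1−z)). -/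
noncomputable def Qhom (z : ℝ) : ℝ :=
  Real.exp (-1 / (2 * z)) * Real.sqrt (z / (1 - z))

open Real

lemma errf_hasDerivAt (x : ℝ) :
    HasDerivAt errf ((2 / Real.sqrt π) * Real.exp (-x ^ 2)) x := by
  have hc : Continuous fun t : ℝ => Real.exp (-t ^ 2) := by continuity
  have h : HasDerivAt (fun y => ∫ t in (0:ℝ)..y, Real.exp (-t ^ 2))
      (Real.exp (-x ^ 2)) x :=
    intervalIntegral.integral_hasDerivAt_right
      (hc.intervalIntegrable 0 x) (hc.stronglyMeasurableAtFilter _ _) hc.continuousAt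
  exact h.const_mul _

noncomputable def Ghom (z : ℝ) : ℝ :=
  -(Real.sqrt (π / (2 * Real.exp 1)) * errf (Real.sqrt ((1 - z) / (2 * z))))
    - Real.exp (-1 / (2 * z)) * Real.sqrt (z * (1 - z))

lemma Ghom_hasDerivAt {z : ℝ} (hz0 : 0 < z) (hz1 : z < 1) :
    HasDerivAt Ghom (Qhom z) z := by
  have hz0' : z ≠ 0 := ne_of_gt hz0
  have h1z : 0 < 1 - z := by linarith
  have hw : 0 < (1 - z) / (2 * z) := by positivity
  -- derivative of w = (1-z)/(2z)
  have hwd : HasDerivAt (fun z : ℝ => (1 - z) / (2 * z))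
      ((-1 / (2 * z ^ 2))) z := by
    have h : HasDerivAt (fun z : ℝ => (1 - z) / (2 * z)) _ z := (HasDerivAt.const_sub 1 (hasDerivAt_id z)).div
      ((hasDerivAt_id z).const_mul 2) (by positivity)
    convert h using 1
    simp only [id]
    field_simp
    ring
  -- derivative of g = sqrt w
  have hg : HasDerivAt (fun z : ℝ => Real.sqrt ((1 - z) / (2 * z)))
      (1 / (2 * Real.sqrt ((1 - z) / (2 * z))) * (-1 / (2 * z ^ 2))) z :=
    (Real.hasDerivAt_sqrt (ne_of_gt hw)).comp z hwd
  -- derivative of errf ∘ g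
  have herf : HasDerivAt (fun z : ℝ => errf (Real.sqrt ((1 - z) / (2 * z))))
      ((2 / Real.sqrt π) * Real.exp (-(Real.sqrt ((1 - z) / (2 * z))) ^ 2) *
        (1 / (2 * Real.sqrt ((1 - z) / (2 * z))) * (-1 / (2 * z ^ 2)))) z :=
    (errf_hasDerivAt _).comp z hg
  -- derivative of exp(-1/(2z))
  have hed : HasDerivAt (fun z : ℝ => -1 / (2 * z)) (1 / (2 * z ^ 2)) z := by
    have h : HasDerivAt (fun z : ℝ => -1 / (2 * z)) _ z := (hasDerivAt_const z (-1 : ℝ)).div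
      ((hasDerivAt_id z).const_mul 2) (by positivity)
    convert h using 1
    field_simp
    ring
  have hexp : HasDerivAt (fun z : ℝ => Real.exp (-1 / (2 * z)))
      (Real.exp (-1 / (2 * z)) * (1 / (2 * z ^ 2))) z := hed.exp
  -- derivative of sqrt (z(1-z))
  have hp : HasDerivAt (fun z : ℝ => z * (1 - z)) (1 - 2 * z) z := by
    have h : HasDerivAt (fun z : ℝ => z * (1 - z)) _ z := (hasDerivAt_id z).mul (HasDerivAt.const_sub 1 (hasDerivAt_id z))
    have : (1:ℝ) - z + -z = 1 - 2*z := by ring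
    simpa [this] using h
  have hzz : (0:ℝ) < z * (1 - z) := by positivity
  have hs2 : HasDerivAt (fun z : ℝ => Real.sqrt (z * (1 - z)))
      (1 / (2 * Real.sqrt (z * (1 - z))) * (1 - 2 * z)) z :=
    (Real.hasDerivAt_sqrt (ne_of_gt hzz)).comp z hp
  have hG : HasDerivAt Ghom
      (-(Real.sqrt (π / (2 * Real.exp 1)) *
          ((2 / Real.sqrt π) * Real.exp (-(Real.sqrt ((1 - z) / (2 * z))) ^ 2) *
            (1 / (2 * Real.sqrt ((1 - z) / (2 * z))) * (-1 / (2 * z ^ 2)))))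
        - (Real.exp (-1 / (2 * z)) * (1 / (2 * z ^ 2)) * Real.sqrt (z * (1 - z))
            + Real.exp (-1 / (2 * z)) *
              (1 / (2 * Real.sqrt (z * (1 - z))) * (1 - 2 * z)))) z :=
    ((herf.const_mul _).neg).sub (hexp.mul hs2)
  convert hG using 1
  -- now the algebraic identity
  set a := Real.sqrt z with ha_def
  set b := Real.sqrt (1 - z) with hb_def
  have ha : a ^ 2 = z := Real.sq_sqrt hz0.le
  have hb : b ^ 2 = 1 - z := Real.sq_sqrt h1z.le
  have ha0 : 0 < a := Real.sqrt_pos.mpr hz0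
  have hb0 : 0 < b := Real.sqrt_pos.mpr h1z
  have hc2 : Real.sqrt 2 ^ 2 = 2 := Real.sq_sqrt (by norm_num)
  have hc20 : 0 < Real.sqrt 2 := Real.sqrt_pos.mpr (by norm_num)
  have hcπ : Real.sqrt π ^ 2 = π := Real.sq_sqrt pi_pos.le
  have hcπ0 : 0 < Real.sqrt π := Real.sqrt_pos.mpr pi_pos
  have hce : Real.sqrt (Real.exp 1) ^ 2 = Real.exp 1 := Real.sq_sqrt (Real.exp_pos 1).le
  have hce0 : 0 < Real.sqrt (Real.exp 1) := Real.sqrt_pos.mpr (Real.exp_pos 1)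
  have hab : Real.sqrt (z * (1 - z)) = a * b := Real.sqrt_mul hz0.le _
  have hq : Real.sqrt (z / (1 - z)) = a / b := Real.sqrt_div hz0.le _
  have hw' : Real.sqrt ((1 - z) / (2 * z)) = b / (Real.sqrt 2 * a) := by
    rw [Real.sqrt_div h1z.le, Real.sqrt_mul (by norm_num : (0:ℝ) ≤ 2)]
  have hA : Real.sqrt (π / (2 * Real.exp 1))
      = Real.sqrt π / (Real.sqrt 2 * Real.sqrt (Real.exp 1)) := by
    rw [Real.sqrt_div pi_pos.le, Real.sqrt_mul (by norm_num : (0:ℝ) ≤ 2)]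
  have hsw : (Real.sqrt ((1 - z) / (2 * z))) ^ 2 = (1 - z) / (2 * z) :=
    Real.sq_sqrt hw.le
  have hexpw : Real.exp (-((1 - z) / (2 * z)))
      = Real.sqrt (Real.exp 1) * Real.exp (-1 / (2 * z)) := by
    have h1 : -((1 - z) / (2 * z)) = 1 / 2 + (-1 / (2 * z)) := by
      field_simp
      ring
    rw [h1, Real.exp_add]
    congr 1
    rw [← Real.exp_half]
  rw [Qhom, hq, hsw, hexpw, hab, hw', hA]
  have hE0 : Real.exp (-1 / (2 * z)) ≠ 0 := (Real.exp_pos _).ne'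
  field_simp
  linear_combination (2 * z ^ 2 - 1 + b ^ 2) * ha + z * hb

/-- Explicit antiderivative formula for the optimal homodyne scale integral:
∫_u^v e^{-1/(2z)}√(z/(1−z)) dz
  = √(π/(2e))(erf(√((1−u)/(2u))) − erf(√((1−v)/(2v))))
    + e^{-1/(2u)}√(u(1−u)) − e^{-1/(2v)}√(v(1−v)). -/
theorem hom_scale_integral (u v : ℝ) (hu : 0 < u) (huv : u ≤ v) (hv : v < 1) :
    ∫ z in u..v, Qhom z =
      Real.sqrt (Real.pi / (2 * Real.exp 1)) *
        (errf (Real.sqrt ((1 - u) / (2 * u)))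
          - errf (Real.sqrt ((1 - v) / (2 * v))))
      + Real.exp (-1 / (2 * u)) * Real.sqrt (u * (1 - u))
      - Real.exp (-1 / (2 * v)) * Real.sqrt (v * (1 - v)) := by
  have hmem : ∀ z ∈ Set.uIcc u v, 0 < z ∧ z < 1 := by
    intro z hz
    rw [Set.uIcc_of_le huv] at hz
    exact ⟨lt_of_lt_of_le hu hz.1, lt_of_le_of_lt hz.2 hv⟩
  have hderiv : ∀ z ∈ Set.uIcc u v, HasDerivAt Ghom (Qhom z) z := fun z hz =>
    Ghom_hasDerivAt (hmem z hz).1 (hmem z hz).2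
  have hcont : ContinuousOn Qhom (Set.uIcc u v) := by
    apply ContinuousOn.mul
    · exact Real.continuous_exp.comp_continuousOn
        (continuousOn_const.div (continuousOn_const.mul continuousOn_id)
          fun z hz => by have := (hmem z hz).1; positivity)
    · exact Real.continuous_sqrt.comp_continuousOn
        (continuousOn_id.div (continuousOn_const.sub continuousOn_id)
          fun z hz => by have := (hmem z hz).2; show (1:ℝ) - z ≠ 0; linarith)
  have h := intervalIntegral.integral_eq_sub_of_hasDerivAt hderiv
    (hcont.intervalIntegrable)
  rw [h]
  unfold Ghom
  ring
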